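/- Let P be a continuous L-ordered set. Then for every y ∈ P, the L-subset ↑y (defined by ↑y(x) = e(y,x)) is a super-compact L-subset of the Scott space (P, σ_L(P)); consequently (P, σ_L(P)) is locally super-compact. -/
import Mathlib


open scoped Classical

namespace FuzzyPaper

variable {L : Type*} [Order.Frame L]

/-- The inclusion L-order on L-subsets: sub(A,B) = ⨅ x, A x ⇨ B x. -/
def subF {X : Type*} (A B : X → L) : L := ⨅ x, A x ⇨ B x

/-- `e` is an L-order: reflexivity, transitivity, antisymmetry. -/
def IsLOrder {P : Type*} (e : P → P → L) : Prop :=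
  (∀ x, e x x = ⊤) ∧ (∀ x y z, e x y ⊓ e y z ≤ e x z) ∧
  (∀ x y, e x y ⊓ e y x = ⊤ → x = y)

/-- `D` is a directed L-subset of `(P, e)`. -/
def IsDirectedL {P : Type*} (e : P → P → L) (D : P → L) : Prop :=
  (⨆ x, D x) = ⊤ ∧ ∀ x y, D x ⊓ D y ≤ ⨆ z, D z ⊓ e x z ⊓ e y z

/-- `x` is a supremum of the L-subset `A`: e(x,y) = sub(A, ↓y) for all y. -/
def IsSupOf {P : Type*} (e : P → P → L) (A : P → L) (x : P) : Prop :=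
  ∀ y, e x y = ⨅ z, A z ⇨ e z y

/-- The fuzzy way-below L-subset ⇓x :
⇓x(y) = ⨅_{D directed with a supremum s} (e(x,s) ⇨ ⨆ d, D d ⊓ e(y,d)). -/
def dwb {P : Type*} (e : P → P → L) (x : P) : P → L := fun y =>
  ⨅ Ds : {Ds : (P → L) × P // IsDirectedL e Ds.1 ∧ IsSupOf e Ds.1 Ds.2},
    e x Ds.1.2 ⇨ ⨆ d, Ds.1.1 d ⊓ e y d

/-- A continuous L-ordered set: ⇓x is directed with supremum x, for each x. -/
def IsContinuousLOrder {P : Type*} (e : P → P → L) : Prop :=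
  IsLOrder e ∧ ∀ x, IsDirectedL e (dwb e x) ∧ IsSupOf e (dwb e x) x

/-- An L-dcpo: every directed L-subset has a supremum. -/
def IsLDcpo {P : Type*} (e : P → P → L) : Prop :=
  IsLOrder e ∧ ∀ D, IsDirectedL e D → ∃ x, IsSupOf e D x

/-- A continuous L-dcpo. -/
def IsContinuousLDcpo {P : Type*} (e : P → P → L) : Prop :=
  IsLDcpo e ∧ ∀ x, IsDirectedL e (dwb e x) ∧ IsSupOf e (dwb e x) x

/-- Scott open L-subsets: upper sets inaccessible by directed suprema. -/
def IsScottOpen {P : Type*} (e : P → P → L) (A : P → L) : Prop :=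
  (∀ x y, A x ⊓ e x y ≤ A y) ∧
  ∀ D s, IsDirectedL e D → IsSupOf e D s → A s = ⨆ x, A x ⊓ D x

/-- The Scott L-topology. -/
def scottOpens {P : Type*} (e : P → P → L) : Set (P → L) := {A | IsScottOpen e A}

/-- `𝒪` is a (stratified) L-topology on X. -/
def IsLTop {X : Type*} (𝒪 : Set (X → L)) : Prop :=
  (∀ A ∈ 𝒪, ∀ B ∈ 𝒪, A ⊓ B ∈ 𝒪) ∧ (∀ S ⊆ 𝒪, sSup S ∈ 𝒪) ∧
  (∀ a : L, (fun _ => a) ∈ 𝒪)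

/-- T₀ separation. -/
def IsT0 {X : Type*} (𝒪 : Set (X → L)) : Prop :=
  ∀ x y : X, (∀ A ∈ 𝒪, A x = A y) → x = y

/-- The specialization L-order of an L-topological space. -/
def specE {X : Type*} (𝒪 : Set (X → L)) : X → X → L := fun x y =>
  ⨅ A : 𝒪, (A : X → L) x ⇨ (A : X → L) y

/-- A point of 𝒪(X): preserves binary meets, arbitrary joins and constants. -/
def IsPoint {X : Type*} (𝒪 : Set (X → L)) (p : 𝒪 → L) : Prop :=
  (∀ A B C : 𝒪, (C : X → L) = (A : X → L) ⊓ (B : X → L) → p C = p A ⊓ p B) ∧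
  (∀ (S : Set 𝒪) (C : 𝒪), (C : X → L) = sSup (Subtype.val '' S) →
    p C = ⨆ A ∈ S, p A) ∧
  (∀ (a : L) (C : 𝒪), (C : X → L) = (fun _ => a) → p C = a)

/-- The inclusion L-order on maps 𝒪 → L (in particular on points). -/
def subPt {X : Type*} (𝒪 : Set (X → L)) (p q : 𝒪 → L) : L := ⨅ A, p A ⇨ q A

/-- η : x ↦ [x], where [x](A) = A(x). -/
def etaPt {X : Type*} (𝒪 : Set (X → L)) (x : X) : 𝒪 → L := fun A => (A : X → L) x

/-- L-sobriety: η is a bijection onto the set of points. -/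
def IsSober {X : Type*} (𝒪 : Set (X → L)) : Prop :=
  (∀ x y : X, etaPt 𝒪 x = etaPt 𝒪 y → x = y) ∧
  (∀ p : 𝒪 → L, IsPoint 𝒪 p → ∃ x, p = etaPt 𝒪 x)

/-- Super-compact L-subsets. -/
def IsSuperCompact {X : Type*} (𝒪 : Set (X → L)) (A : X → L) : Prop :=
  (⨆ x, A x) = ⊤ ∧ ∀ S ⊆ 𝒪, subF A (sSup S) = ⨆ V ∈ S, subF A V

/-- Interior operator. -/
def interiorF {X : Type*} (𝒪 : Set (X → L)) (A : X → L) : X → L :=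
  sSup {B ∈ 𝒪 | B ≤ A}

/-- Locally super-compact L-topological spaces. -/
def IsLocallySC {X : Type*} (𝒪 : Set (X → L)) : Prop :=
  ∀ A ∈ 𝒪, A = fun x => ⨆ B ∈ {B | IsSuperCompact 𝒪 B}, subF B A ⊓ interiorF 𝒪 B x

/-- `ℬ` is a base of the L-topology `𝒪`. -/
def IsBase {X : Type*} (𝒪 : Set (X → L)) (ℬ : Set (X → L)) : Prop :=
  ℬ ⊆ 𝒪 ∧ ∀ A ∈ 𝒪, A = fun x => ⨆ B ∈ ℬ, subF B A ⊓ B x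

/-- Strong locally super-compact: a base of super-compact open sets. -/
def IsStrongLocallySC {X : Type*} (𝒪 : Set (X → L)) : Prop :=
  ∃ ℬ, IsBase 𝒪 ℬ ∧ ∀ B ∈ ℬ, IsSuperCompact 𝒪 B

/-- Continuity of maps of L-topological spaces. -/
def LCont {X Y : Type*} (𝒪X : Set (X → L)) (𝒪Y : Set (Y → L)) (f : X → Y) : Prop :=
  ∀ B ∈ 𝒪Y, (B ∘ f) ∈ 𝒪X

/-- k(x)(y) = e(y,x) if y is compact (⇓y(y) = ⊤), and ⊥ otherwise. -/
noncomputable def kfun {P : Type*} (e : P → P → L) (x : P) : P → L := fun y =>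
  if dwb e y y = ⊤ then e y x else ⊥

/-- Algebraic L-dcpo. -/
def IsAlgebraicLDcpo {P : Type*} (e : P → P → L) : Prop :=
  IsLDcpo e ∧ ∀ x, IsDirectedL e (kfun e x) ∧ IsSupOf e (kfun e x) x

/-- Quasihomeomorphism: f^← : 𝒪Y → 𝒪X is a bijection. -/
def IsQuasiHomeo {X Y : Type*} (𝒪X : Set (X → L)) (𝒪Y : Set (Y → L)) (f : X → Y) : Prop :=
  LCont 𝒪X 𝒪Y f ∧ (∀ A ∈ 𝒪X, ∃ B ∈ 𝒪Y, B ∘ f = A) ∧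
  (∀ B₁ ∈ 𝒪Y, ∀ B₂ ∈ 𝒪Y, B₁ ∘ f = B₂ ∘ f → B₁ = B₂)

/-- Subspace embedding of L-topological spaces. -/
def IsEmbeddingL {X Y : Type*} (𝒪X : Set (X → L)) (𝒪Y : Set (Y → L)) (f : X → Y) : Prop :=
  Function.Injective f ∧ 𝒪X = {A | ∃ B ∈ 𝒪Y, B ∘ f = A}

/-- Strict embedding: a quasihomeomorphism which is a subspace embedding. -/
def IsStrictEmbedding {X Y : Type*} (𝒪X : Set (X → L)) (𝒪Y : Set (Y → L)) (f : X → Y) : Prop :=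
  IsEmbeddingL 𝒪X 𝒪Y f ∧ IsQuasiHomeo 𝒪X 𝒪Y f

/-- L-sobrification: universal L-sober space over X. -/
def IsSobrification {X Y : Type*} (𝒪X : Set (X → L)) (𝒪Y : Set (Y → L)) (j : X → Y) : Prop :=
  IsLTop 𝒪Y ∧ IsSober 𝒪Y ∧ LCont 𝒪X 𝒪Y j ∧
  ∀ (Z : Type*) (𝒪Z : Set (Z → L)), IsLTop 𝒪Z → IsSober 𝒪Z →
    ∀ f : X → Z, LCont 𝒪X 𝒪Z f →
      ∃! g : Y → Z, LCont 𝒪Y 𝒪Z g ∧ f = g ∘ j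



section Proof11

variable {P : Type*}

private lemma himp_iSup_left' {ι : Sort*} (f : ι → L) (a : L) :
    (⨆ i, f i) ⇨ a = ⨅ i, f i ⇨ a :=
  le_antisymm (le_iInf fun i => himp_le_himp_right (le_iSup f i))
    (le_himp_iff.2 (by
      rw [inf_iSup_eq]
      exact iSup_le fun i => (inf_le_inf_right _ (iInf_le _ i)).trans himp_inf_le))

private lemma himp_iInf_right' {ι : Sort*} (a : L) (f : ι → L) :
    (a ⇨ ⨅ i, f i) = ⨅ i, a ⇨ f i :=
  le_antisymm (le_iInf fun i => himp_le_himp_left (iInf_le f i))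
    (le_himp_iff.2 (le_iInf fun i => (inf_le_inf_right a (iInf_le _ i)).trans himp_inf_le))

private lemma sSup_apply'' {X : Type*} (S : Set (X → L)) (x : X) :
    sSup S x = ⨆ V ∈ S, V x := by
  rw [sSup_apply, iSup_subtype]

private lemma ideal_pair (e : P → P → L) (hr : ∀ x, e x x = ⊤)
    (ht : ∀ x y z, e x y ⊓ e y z ≤ e x z) (x : P) :
    IsDirectedL e (fun z => e z x) ∧ IsSupOf e (fun z => e z x) x := by
  refine ⟨⟨top_unique (le_iSup_of_le x (hr x).ge), fun a b =>
    le_iSup_of_le x (by simp [hr x])⟩, fun t => ?_⟩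
  refine le_antisymm (le_iInf fun z => le_himp_iff.2 ?_) ?_
  · rw [inf_comm]; exact ht z x t
  · exact (iInf_le _ x).trans (by simp [hr x])

private lemma dwb_le_e (e : P → P → L) (hr : ∀ x, e x x = ⊤)
    (ht : ∀ x y z, e x y ⊓ e y z ≤ e x z) (x y : P) : dwb e x y ≤ e y x := by
  have h := ideal_pair e hr ht x
  refine (iInf_le _ ⟨(fun z => e z x, x), h.1, h.2⟩).trans ?_
  show e x x ⇨ (⨆ d, e d x ⊓ e y d) ≤ _
  rw [hr x, top_himp]
  exact iSup_le fun d => (inf_comm _ _).le.trans (ht y d x)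

private lemma dwb_upper (e : P → P → L)
    (ht : ∀ x y z, e x y ⊓ e y z ≤ e x z) (x x' y : P) :
    dwb e x y ⊓ e x x' ≤ dwb e x' y := by
  refine le_iInf fun Ds => le_himp_iff.2 ?_
  calc dwb e x y ⊓ e x x' ⊓ e x' Ds.1.2
      ≤ dwb e x y ⊓ e x Ds.1.2 := by
        rw [inf_assoc]; exact inf_le_inf_left _ (ht x x' _)
    _ ≤ _ := le_himp_iff.1 (iInf_le _ Ds)

private lemma dwb_lower (e : P → P → L)
    (ht : ∀ x y z, e x y ⊓ e y z ≤ e x z) (x d y : P) :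
    dwb e x d ⊓ e y d ≤ dwb e x y := by
  refine le_iInf fun Ds => le_himp_iff.2 ?_
  calc dwb e x d ⊓ e y d ⊓ e x Ds.1.2
      ≤ (⨆ d', Ds.1.1 d' ⊓ e d d') ⊓ e y d := by
        rw [inf_right_comm]
        exact inf_le_inf_right _ (le_himp_iff.1 (iInf_le _ Ds))
    _ ≤ _ := by
        rw [iSup_inf_eq]
        refine iSup_le fun d' => le_iSup_of_le d' ?_
        calc Ds.1.1 d' ⊓ e d d' ⊓ e y d
            = Ds.1.1 d' ⊓ (e y d ⊓ e d d') := by ac_rfl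
          _ ≤ _ := inf_le_inf_left _ (ht y d d')

private lemma le_of_sup (e : P → P → L) (hr : ∀ x, e x x = ⊤)
    {D : P → L} {s : P} (hS : IsSupOf e D s) (z : P) : D z ≤ e z s := by
  have h := hS s
  rw [hr s] at h
  have h2 : (⊤ : L) ≤ D z ⇨ e z s := h.le.trans (iInf_le _ z)
  simpa using le_himp_iff.1 h2

private lemma Efacts (e : P → P → L) (hr : ∀ x, e x x = ⊤)
    (ht : ∀ x y z, e x y ⊓ e y z ≤ e x z)
    (hc : ∀ x, IsDirectedL e (dwb e x) ∧ IsSupOf e (dwb e x) x)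
    {D : P → L} {s : P} (hD : IsDirectedL e D) (hS : IsSupOf e D s) :
    IsDirectedL e (fun d => ⨆ x, D x ⊓ dwb e x d) ∧
      IsSupOf e (fun d => ⨆ x, D x ⊓ dwb e x d) s := by
  constructor
  · constructor
    · have h1 : (⨆ d, ⨆ x, D x ⊓ dwb e x d) = ⨆ x, D x := by
        rw [iSup_comm]
        exact iSup_congr fun x => by rw [← inf_iSup_eq, (hc x).1.1, inf_top_eq]
      rw [h1, hD.1]
    · intro a b
      rw [iSup_inf_eq]
      refine iSup_le fun x => ?_
      rw [inf_iSup_eq]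
      refine iSup_le fun x' => ?_
      calc D x ⊓ dwb e x a ⊓ (D x' ⊓ dwb e x' b)
          = (D x ⊓ D x') ⊓ (dwb e x a ⊓ dwb e x' b) := by ac_rfl
        _ ≤ (⨆ u, D u ⊓ e x u ⊓ e x' u) ⊓ (dwb e x a ⊓ dwb e x' b) :=
            inf_le_inf_right _ (hD.2 x x')
        _ ≤ _ := by
            rw [iSup_inf_eq]
            refine iSup_le fun u => ?_
            calc D u ⊓ e x u ⊓ e x' u ⊓ (dwb e x a ⊓ dwb e x' b)
                = D u ⊓ ((dwb e x a ⊓ e x u) ⊓ (dwb e x' b ⊓ e x' u)) := by ac_rfl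
              _ ≤ D u ⊓ (dwb e u a ⊓ dwb e u b) :=
                  inf_le_inf_left _ (inf_le_inf (dwb_upper e ht x u a) (dwb_upper e ht x' u b))
              _ ≤ D u ⊓ ⨆ z, dwb e u z ⊓ e a z ⊓ e b z := inf_le_inf_left _ ((hc u).1.2 a b)
              _ = ⨆ z, D u ⊓ (dwb e u z ⊓ e a z ⊓ e b z) := inf_iSup_eq _ _
              _ ≤ ⨆ z, (⨆ x, D x ⊓ dwb e x z) ⊓ e a z ⊓ e b z := by
                  refine iSup_mono fun z => ?_
                  calc D u ⊓ (dwb e u z ⊓ e a z ⊓ e b z)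
                      = (D u ⊓ dwb e u z) ⊓ e a z ⊓ e b z := by ac_rfl
                    _ ≤ _ := inf_le_inf_right _ (inf_le_inf_right _ (le_iSup
                        (fun x => D x ⊓ dwb e x z) u))
  · intro t
    have h1 : ∀ z, (⨆ x, D x ⊓ dwb e x z) ⇨ e z t
        = ⨅ x, D x ⇨ (dwb e x z ⇨ e z t) := fun z => by
      rw [himp_iSup_left']
      exact iInf_congr fun x => by rw [← himp_himp]
    have h2 : (⨅ z, (⨆ x, D x ⊓ dwb e x z) ⇨ e z t) = ⨅ x, D x ⇨ e x t := by
      simp_rw [h1]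
      rw [iInf_comm]
      exact iInf_congr fun x => by rw [← himp_iInf_right', ← (hc x).2 t]
    rw [hS t, ← h2]

private lemma scottOpen_wayup (e : P → P → L) (hr : ∀ x, e x x = ⊤)
    (ht : ∀ x y z, e x y ⊓ e y z ≤ e x z)
    (hc : ∀ x, IsDirectedL e (dwb e x) ∧ IsSupOf e (dwb e x) x) (y : P) :
    IsScottOpen e (fun x => dwb e x y) := by
  refine ⟨fun x x' => dwb_upper e ht x x' y, fun D s hD hS => ?_⟩
  obtain ⟨hE, hES⟩ := Efacts e hr ht hc hD hS
  apply le_antisymm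
  · refine (iInf_le _ ⟨(fun d => ⨆ x, D x ⊓ dwb e x d, s), hE, hES⟩).trans ?_
    show e s s ⇨ (⨆ d, (⨆ x, D x ⊓ dwb e x d) ⊓ e y d) ≤ _
    rw [hr s, top_himp]
    refine iSup_le fun d => ?_
    rw [iSup_inf_eq]
    refine iSup_le fun x => le_iSup_of_le x ?_
    calc D x ⊓ dwb e x d ⊓ e y d
        ≤ D x ⊓ dwb e x y := by
          rw [inf_assoc]; exact inf_le_inf_left _ (dwb_lower e ht x d y)
      _ = dwb e x y ⊓ D x := inf_comm _ _
  · refine iSup_le fun x => ?_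
    calc dwb e x y ⊓ D x ≤ dwb e x y ⊓ e x s := inf_le_inf_left _ (le_of_sup e hr hS x)
      _ ≤ dwb e s y := dwb_upper e ht x s y

private lemma subF_up (e : P → P → L) (hr : ∀ x, e x x = ⊤) {A : P → L}
    (hA : ∀ x z, A x ⊓ e x z ≤ A z) (y : P) :
    subF (fun x => e y x) A = A y := by
  refine le_antisymm ?_ (le_iInf fun x => le_himp_iff.2 (hA y x))
  show (⨅ x, e y x ⇨ A x) ≤ A y
  exact (iInf_le _ y).trans (by rw [hr y, top_himp])

private lemma sc_up (e : P → P → L) (hr : ∀ x, e x x = ⊤)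
    (y : P) : IsSuperCompact (scottOpens e) (fun x => e y x) := by
  constructor
  · exact top_unique (le_iSup_of_le y (hr y).ge)
  · intro S hS
    apply le_antisymm
    · have h1 : subF (fun x => e y x) (sSup S) ≤ sSup S y := by
        show (⨅ x, e y x ⇨ sSup S x) ≤ _
        exact (iInf_le _ y).trans (by rw [hr y, top_himp])
      refine h1.trans ?_
      rw [sSup_apply'']
      refine iSup_le fun V => iSup_le fun hV => le_iSup_of_le V (le_iSup_of_le hV ?_)
      exact (subF_up e hr (hS hV).1 y).ge
    · refine iSup_le fun V => iSup_le fun hV => le_iInf fun x => ?_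
      exact (iInf_le _ x).trans (himp_le_himp_left (le_sSup hV x))

end Proof11

/-- For a continuous L-ordered set P, each ↑y is super-compact in (P, σ_L(P)),
and the Scott space is locally super-compact. -/
theorem stmt11 {P : Type*} (e : P → P → L) (he : IsContinuousLOrder e) :
    (∀ y : P, IsSuperCompact (scottOpens e) (fun x => e y x)) ∧
    IsLocallySC (scottOpens e) := by
  obtain ⟨⟨hr, ht, _⟩, hc⟩ := he
  refine ⟨sc_up e hr, ?_⟩
  intro A hA
  have hAo : IsScottOpen e A := hA
  funext x
  apply le_antisymm
  · rw [hAo.2 (dwb e x) x (hc x).1 (hc x).2]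
    refine iSup_le fun y => ?_
    refine le_iSup_of_le (fun z => e y z) (le_iSup_of_le (sc_up e hr y) (le_inf ?_ ?_))
    · exact inf_le_left.trans (subF_up e hr hAo.1 y).ge
    · refine inf_le_right.trans ?_
      have hmem : (fun z => dwb e z y) ∈ {B ∈ scottOpens e | B ≤ fun z => e y z} :=
        ⟨scottOpen_wayup e hr ht hc y, fun z => dwb_le_e e hr ht z y⟩
      exact le_sSup hmem x
  · refine iSup_le fun B => iSup_le fun hB => ?_
    have h1 : interiorF (scottOpens e) B x ≤ B x :=
      (sSup_le (fun C hC => hC.2) : interiorF (scottOpens e) B ≤ B) x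
    calc subF B A ⊓ interiorF (scottOpens e) B x ≤ subF B A ⊓ B x := inf_le_inf_left _ h1
      _ ≤ A x := le_himp_iff.1 (iInf_le _ x)

end FuzzyPaper
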